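/- arXiv:2206.02001 — 4 statements merged into one kernel-verified Lean document; each statement's English description precedes it below -/
import Mathlib

section
/- Let I : ℝ² → ℝ be continuous with compact support, let β > 0, let w > 0, and let V be the closed subspace of the Hilbert space L²(ℝ²) consisting of functions supported in the square C = [−w/2, w/2]². Define g : V → ℝ by g(K) = ∫_{ℝ²} r_β((K ⋆ I)(x)) dx. Then g is Fréchet differentiable at every K ∈ V, and its derivative applied to δK ∈ V is ∫_{ℝ²} (r_β'(K ⋆ I) ⋆ I)(z) · δK(z) dz; equivalently, the gradient of g at K with respect to the L² inner product on V is the restriction of r_β'(K ⋆ I) ⋆ I to C. -/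
open MeasureTheory

/-- The cross-correlation `(f ⋆ g)(z) = ∫_{ℝ²} f(x)·g(x + z) dx`. -/
noncomputable def crossCorr (f g : ℝ × ℝ → ℝ) (z : ℝ × ℝ) : ℝ :=
  ∫ x : ℝ × ℝ, f x * g (x + z)

/-- The Swish activation `r_β(x) = x/(1 + exp(−βx))`. -/
noncomputable def swish (β x : ℝ) : ℝ := x / (1 + Real.exp (-β * x))

open Filter Asymptotics
open scoped ContDiff InnerProductSpace

lemma swish_contDiff (β : ℝ) : ContDiff ℝ ∞ (swish β) := by
  have h : ∀ x : ℝ, 1 + Real.exp (-β * x) ≠ 0 := fun x => by positivity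
  exact contDiff_id.div (contDiff_const.add ((Real.contDiff_exp.comp (contDiff_const.mul contDiff_id)))) h

lemma swish_zero (β : ℝ) : swish β 0 = 0 := by simp [swish]

lemma taylor_bound {f : ℝ → ℝ} (hf : ContDiff ℝ ∞ f) (R : ℝ) :
    ∃ L, 0 ≤ L ∧ ∀ a b : ℝ, |a| ≤ R → |b| ≤ R →
      |f b - f a - deriv f a * (b - a)| ≤ L * (b - a)^2 := by
  have hd : Differentiable ℝ f := (contDiff_infty_iff_deriv.mp hf).1
  have hf' : ContDiff ℝ ∞ (deriv f) := (contDiff_infty_iff_deriv.mp hf).2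
  have hd' : Differentiable ℝ (deriv f) := (contDiff_infty_iff_deriv.mp hf').1
  have hf'' : Continuous (deriv (deriv f)) := (contDiff_infty_iff_deriv.mp hf').2.continuous
  obtain ⟨M, hM⟩ := (isCompact_Icc (a := -R) (b := R)).exists_bound_of_continuousOn
    hf''.continuousOn
  refine ⟨max M 0, le_max_right _ _, fun a b ha hb => ?_⟩
  have ha' : a ∈ Set.Icc (-R) R := abs_le.mp ha |>.imp (by simp) (by simp) |> fun h => ⟨h.1, h.2⟩
  have hb' : b ∈ Set.Icc (-R) R := abs_le.mp hb |>.imp (by simp) (by simp) |> fun h => ⟨h.1, h.2⟩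
  have hsub : Set.uIcc a b ⊆ Set.Icc (-R) R := Set.uIcc_subset_Icc ha' hb'
  have hconv : Convex ℝ (Set.uIcc a b) := convex_uIcc a b
  -- step 1: deriv f is Lipschitz-type bounded on uIcc
  have step1 : ∀ x ∈ Set.uIcc a b, ‖deriv f x - deriv f a‖ ≤ (max M 0) * |b - a| := by
    intro x hx
    have := hconv.norm_image_sub_le_of_norm_deriv_le (C := max M 0) (fun y hy => hd' y)
      (fun y hy => (hM _ (hsub hy)).trans (le_max_left _ _))
      (Set.left_mem_uIcc) hx
    refine this.trans ?_
    have : ‖x - a‖ ≤ |b - a| := by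
      rw [Real.norm_eq_abs, abs_le]
      rcases Set.mem_uIcc.mp hx with h | h <;>
        rcases abs_cases (b - a) with ⟨e, _⟩ | ⟨e, _⟩ <;>
        constructor <;> linarith [h.1, h.2]
    exact mul_le_mul_of_nonneg_left this (le_max_right M 0)
  -- step 2: apply MVT to g = f - deriv f a * id
  set g : ℝ → ℝ := fun t => f t - deriv f a * t with hgdef
  have hgd : ∀ x ∈ Set.uIcc a b, DifferentiableAt ℝ g x := fun x _ =>
    (hd x).sub ((differentiable_id.const_mul _) x)
  have hgderiv : ∀ x, deriv g x = deriv f x - deriv f a := by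
    intro x
    have h1 : HasDerivAt g (deriv f x - deriv f a) x := by
      have h2 := ((hd x).hasDerivAt).sub ((hasDerivAt_id x).const_mul (deriv f a))
      rw [mul_one] at h2
      exact h2
    exact h1.deriv
  have := hconv.norm_image_sub_le_of_norm_deriv_le hgd
    (fun y hy => by rw [hgderiv]; exact step1 y hy)
    Set.left_mem_uIcc Set.right_mem_uIcc
  have key : ‖g b - g a‖ = |f b - f a - deriv f a * (b - a)| := by
    rw [hgdef, Real.norm_eq_abs]; ring_nf
  rw [key] at this
  refine this.trans (le_of_eq ?_)
  rw [Real.norm_eq_abs, ← sq_abs (b - a), sq, mul_assoc]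

section CC
variable {I : ℝ × ℝ → ℝ}

lemma memLp_shift (hIc : Continuous I) (hIs : HasCompactSupport I) (z : ℝ × ℝ) :
    MemLp (fun x => I (x + z)) 2 (volume : Measure (ℝ × ℝ)) := by
  have hc : Continuous fun x : ℝ × ℝ => I (x + z) := hIc.comp (continuous_id.add continuous_const)
  have hcs : HasCompactSupport fun x : ℝ × ℝ => I (x + z) :=
    hIs.comp_homeomorph (Homeomorph.addRight z)
  exact hc.memLp_of_hasCompactSupport hcs

lemma eLpNorm_shift (hIc : Continuous I) (z : ℝ × ℝ) :
    eLpNorm (fun x => I (x + z)) 2 (volume : Measure (ℝ × ℝ)) = eLpNorm I 2 volume :=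
  eLpNorm_comp_measurePreserving (hIc.aestronglyMeasurable) (measurePreserving_add_right volume z)

lemma integrable_mul_shift (hIc : Continuous I) (hIs : HasCompactSupport I)
    {f : ℝ × ℝ → ℝ} (hf : MemLp f 2 (volume : Measure (ℝ × ℝ))) (z : ℝ × ℝ) :
    Integrable (fun x => f x * I (x + z)) (volume : Measure (ℝ × ℝ)) := by
  have := (memLp_shift hIc hIs z).smul (φ := f) (r := 1) hf
  rw [memLp_one_iff_integrable] at this
  exact this

lemma crossCorr_coe_eq_inner (hIc : Continuous I) (hIs : HasCompactSupport I)
    (F : Lp ℝ 2 (volume : Measure (ℝ × ℝ))) (z : ℝ × ℝ) :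
    crossCorr (⇑F) I z = ⟪F, (memLp_shift hIc hIs z).toLp _⟫_ℝ := by
  rw [L2.inner_def, crossCorr]
  refine integral_congr_ae ?_
  filter_upwards [(memLp_shift hIc hIs z).coeFn_toLp] with x hx
  rw [hx, RCLike.inner_apply, conj_trivial, mul_comm]

lemma abs_crossCorr_le (hIc : Continuous I) (hIs : HasCompactSupport I)
    (F : Lp ℝ 2 (volume : Measure (ℝ × ℝ))) (z : ℝ × ℝ) :
    |crossCorr (⇑F) I z| ≤ ‖F‖ * (eLpNorm I 2 (volume : Measure (ℝ × ℝ))).toReal := by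
  rw [crossCorr_coe_eq_inner hIc hIs]
  refine (abs_real_inner_le_norm _ _).trans ?_
  rw [MeasureTheory.Lp.norm_toLp, eLpNorm_shift hIc]

lemma crossCorr_add (hIc : Continuous I) (hIs : HasCompactSupport I)
    (F G : Lp ℝ 2 (volume : Measure (ℝ × ℝ))) (z : ℝ × ℝ) :
    crossCorr (⇑(F + G)) I z = crossCorr (⇑F) I z + crossCorr (⇑G) I z := by
  rw [crossCorr, crossCorr, crossCorr,
    ← integral_add (integrable_mul_shift hIc hIs (Lp.memLp F) z)
      (integrable_mul_shift hIc hIs (Lp.memLp G) z)]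
  refine integral_congr_ae ?_
  filter_upwards [Lp.coeFn_add F G] with x hx
  simp only [hx, Pi.add_apply]; ring

lemma continuous_crossCorr (hIc : Continuous I) (hIs : HasCompactSupport I)
    {f : ℝ × ℝ → ℝ} (hf : LocallyIntegrable f (volume : Measure (ℝ × ℝ))) :
    Continuous (crossCorr f I) := by
  have hg : Continuous fun x : ℝ × ℝ => I (-x) := hIc.comp continuous_neg
  have hcs : HasCompactSupport fun x : ℝ × ℝ => I (-x) :=
    hIs.comp_homeomorph (Homeomorph.neg _)
  have h2 : Continuous
      (convolution f (fun x => I (-x)) (ContinuousLinearMap.mul ℝ ℝ) volume) :=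
    hcs.continuous_convolution_right _ hf hg
  have heq : crossCorr f I = fun z =>
      (convolution f (fun x => I (-x)) (ContinuousLinearMap.mul ℝ ℝ) volume) (-z) := by
    funext z
    rw [convolution_def, crossCorr]
    congr 1; funext t
    have : -(-z - t) = t + z := by abel
    rw [this]
    simp
  rw [heq]
  exact h2.comp continuous_neg

lemma crossCorr_eq_zero {f : ℝ × ℝ → ℝ} {C : Set (ℝ × ℝ)}
    (hf : ∀ᵐ x : ℝ × ℝ, x ∉ C → f x = 0) {z : ℝ × ℝ}
    (hz : z ∉ (fun p : (ℝ × ℝ) × (ℝ × ℝ) => p.1 - p.2) '' (tsupport I ×ˢ C)) :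
    crossCorr f I z = 0 := by
  rw [crossCorr, integral_eq_zero_of_ae]
  filter_upwards [hf] with x hx
  by_cases hxC : x ∈ C
  · have hI : I (x + z) = 0 := by
      by_contra h
      exact hz ⟨(x + z, x), ⟨subset_tsupport _ h, hxC⟩, by simp⟩
    simp [hI]
  · simp [hx hxC]

end CC

/-- The closed subspace of `L²(ℝ²)` of functions (a.e.) supported in `C`. -/
noncomputable def suppSubmodule (C : Set (ℝ × ℝ)) :
    Submodule ℝ (Lp ℝ 2 (volume : Measure (ℝ × ℝ))) where
  carrier := {f | ∀ᵐ x : ℝ × ℝ, x ∉ C → f x = 0}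
  add_mem' := by
    intro f g hf hg
    filter_upwards [hf, hg, Lp.coeFn_add f g] with x h1 h2 h3 hx
    simp only [h3, Pi.add_apply, h1 hx, h2 hx, add_zero]
  zero_mem' := by
    filter_upwards [Lp.coeFn_zero ℝ 2 (volume : Measure (ℝ × ℝ))] with x h _
    simp [h]
  smul_mem' := by
    intro c f hf
    filter_upwards [hf, Lp.coeFn_smul c f] with x h1 h2 hx
    simp [h2, h1 hx]

/-- The map `g(K) = ∫_{ℝ²} r_β((K ⋆ I)(x)) dx` on the subspace `V ⊆ L²(ℝ²)` of kernels
supported in the square `C = [−w/2, w/2]²` is Fréchet differentiable at every `K ∈ V`,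
with derivative `δK ↦ ∫_{ℝ²} (r_β'(K ⋆ I) ⋆ I)(z)·δK(z) dz`; i.e. the `L²` gradient of
`g` at `K` is the restriction of `r_β'(K ⋆ I) ⋆ I` to `C`. -/
theorem cnn_pooling_frechet_gradient
    (I : ℝ × ℝ → ℝ) (hIc : Continuous I) (hIs : HasCompactSupport I)
    (β : ℝ) (hβ : 0 < β) (w : ℝ) (hw : 0 < w)
    (C : Set (ℝ × ℝ)) (hC : C = Set.Icc (-(w / 2), -(w / 2)) (w / 2, w / 2))
    (g : suppSubmodule C → ℝ)
    (hg : ∀ K : suppSubmodule C,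
      g K = ∫ x : ℝ × ℝ,
        swish β (crossCorr ((K : Lp ℝ 2 (volume : Measure (ℝ × ℝ))) : ℝ × ℝ → ℝ) I x)) :
    ∀ K : suppSubmodule C, ∃ D : suppSubmodule C →L[ℝ] ℝ,
      HasFDerivAt g D K ∧
      ∀ δK : suppSubmodule C,
        D δK = ∫ z : ℝ × ℝ,
          crossCorr (fun x => deriv (swish β)
              (crossCorr ((K : Lp ℝ 2 (volume : Measure (ℝ × ℝ))) : ℝ × ℝ → ℝ) I x)) I z *
            ((δK : Lp ℝ 2 (volume : Measure (ℝ × ℝ))) : ℝ × ℝ → ℝ) z := by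
  intro K
  classical
  -- basic set facts
  have hCco : IsCompact C := hC ▸ isCompact_Icc
  have hCmeas : MeasurableSet C := (hC ▸ isClosed_Icc : IsClosed C).measurableSet
  set S : Set (ℝ × ℝ) := (fun p : (ℝ × ℝ) × (ℝ × ℝ) => p.1 - p.2) '' (tsupport I ×ˢ C) with hS
  have hSco : IsCompact S := (hIs.prod hCco).image (continuous_fst.sub continuous_snd)
  have hSmeas : MeasurableSet S := hSco.isClosed.measurableSet
  have hSvol : volume S < ⊤ := hSco.measure_lt_top
  -- constants
  set KL : Lp ℝ 2 (volume : Measure (ℝ × ℝ)) := (K : Lp ℝ 2 (volume : Measure (ℝ × ℝ))) with hKL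
  have hKmem : ∀ᵐ x : ℝ × ℝ, x ∉ C → (KL : ℝ × ℝ → ℝ) x = 0 := K.2
  set NI : ℝ := (eLpNorm I 2 (volume : Measure (ℝ × ℝ))).toReal with hNIdef
  have hNI0 : 0 ≤ NI := ENNReal.toReal_nonneg
  set R : ℝ := (‖KL‖ + 1) * NI with hRdef
  have hR0 : 0 ≤ R := mul_nonneg (by positivity) hNI0
  obtain ⟨L, hL0, hTay⟩ := taylor_bound (swish_contDiff β) R
  have hφ'c : Continuous (deriv (swish β)) :=
    (swish_contDiff β).continuous_deriv (by exact_mod_cast le_top)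
  obtain ⟨M0, hM0⟩ := (isCompact_Icc (a := -R) (b := R)).exists_bound_of_continuousOn
    hφ'c.continuousOn
  set M : ℝ := max M0 0 with hMdef
  have hM : ∀ t : ℝ, |t| ≤ R → |deriv (swish β) t| ≤ M := by
    intro t ht
    have := hM0 t (by rw [Set.mem_Icc]; exact abs_le.mp ht)
    exact (this.trans (le_max_left _ _))
  obtain ⟨bI, hbI⟩ := hIs.exists_bound_of_continuous hIc
  -- cross-correlation facts
  have hu_cont : ∀ F : Lp ℝ 2 (volume : Measure (ℝ × ℝ)), Continuous (crossCorr (⇑F) I) :=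
    fun F => continuous_crossCorr hIc hIs ((Lp.memLp F).locallyIntegrable one_le_two)
  have hu_bd : ∀ (F : Lp ℝ 2 (volume : Measure (ℝ × ℝ))) (z), |crossCorr (⇑F) I z| ≤ ‖F‖ * NI :=
    fun F z => abs_crossCorr_le hIc hIs F z
  have hu_zero : ∀ F : suppSubmodule C, ∀ z ∉ S,
      crossCorr (⇑(F : Lp ℝ 2 (volume : Measure (ℝ × ℝ)))) I z = 0 := by
    intro F z hz
    exact crossCorr_eq_zero F.2 hz
  have hKbd : ∀ z, |crossCorr (⇑KL) I z| ≤ R := by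
    intro z
    refine (hu_bd KL z).trans ?_
    exact mul_le_mul_of_nonneg_right (by linarith) hNI0
  -- integrability of the g-integrands
  have hg_int : ∀ F : suppSubmodule C,
      Integrable (fun x => swish β
        (crossCorr (⇑(F : Lp ℝ 2 (volume : Measure (ℝ × ℝ)))) I x)) := by
    intro F
    refine Continuous.integrable_of_hasCompactSupport
      (((swish_contDiff β).continuous).comp (hu_cont _)) ?_
    refine HasCompactSupport.of_support_subset_isCompact hSco ?_
    intro x hx
    by_contra hxS
    rw [Function.mem_support] at hx
    exact hx (by rw [hu_zero F x hxS, swish_zero])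
  -- the gradient function G
  set G : (ℝ × ℝ) → ℝ :=
    crossCorr (fun x => deriv (swish β) (crossCorr (⇑KL) I x)) I with hGdef
  have hGc : Continuous G :=
    continuous_crossCorr hIc hIs ((hφ'c.comp (hu_cont KL)).locallyIntegrable)
  obtain ⟨BG, hBG⟩ := hCco.exists_bound_of_continuousOn hGc.continuousOn
  have hGK : MemLp (C.indicator G) 2 (volume : Measure (ℝ × ℝ)) := by
    have hcs : HasCompactSupport (C.indicator G) :=
      HasCompactSupport.intro hCco (fun x hx => Set.indicator_of_notMem hx _)
    refine hcs.memLp_of_bound ((hGc.aestronglyMeasurable).indicator hCmeas) (max BG 0) ?_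
    refine Filter.Eventually.of_forall (fun x => ?_)
    by_cases hx : x ∈ C
    · rw [Set.indicator_of_mem hx]
      exact (hBG x hx).trans (le_max_left _ _)
    · rw [Set.indicator_of_notMem hx]
      simp [le_max_right]
  set Gelt : Lp ℝ 2 (volume : Measure (ℝ × ℝ)) := hGK.toLp _ with hGLdef
  set D : suppSubmodule C →L[ℝ] ℝ :=
    (innerSL ℝ Gelt).comp (Submodule.subtypeL (suppSubmodule C)) with hDdef
  have hD_eq : ∀ δK : suppSubmodule C,
      D δK = ∫ z : ℝ × ℝ, G z * ((δK : Lp ℝ 2 (volume : Measure (ℝ × ℝ))) : ℝ × ℝ → ℝ) z := by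
    intro δK
    have : D δK = ⟪Gelt, (δK : Lp ℝ 2 (volume : Measure (ℝ × ℝ)))⟫_ℝ := rfl
    rw [this, L2.inner_def]
    refine integral_congr_ae ?_
    have hδ : ∀ᵐ x : ℝ × ℝ, x ∉ C →
        ((δK : Lp ℝ 2 (volume : Measure (ℝ × ℝ))) : ℝ × ℝ → ℝ) x = 0 := δK.2
    filter_upwards [hGK.coeFn_toLp, hδ] with z h1 h2
    rw [RCLike.inner_apply, conj_trivial, h1]
    by_cases hz : z ∈ C
    · rw [Set.indicator_of_mem hz, mul_comm]
    · simp [Set.indicator_of_notMem hz, h2 hz]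
  have hFub : ∀ h : suppSubmodule C,
      D h = ∫ x : ℝ × ℝ, deriv (swish β) (crossCorr (⇑KL) I x) *
        crossCorr (⇑((h : Lp ℝ 2 (volume : Measure (ℝ × ℝ))))) I x := by
    intro h
    set hLp : Lp ℝ 2 (volume : Measure (ℝ × ℝ)) := ↑h with hhLp
    set k : (ℝ × ℝ) → ℝ := C.indicator ⇑hLp with hk
    have hδ : ∀ᵐ x : ℝ × ℝ, x ∉ C → (hLp : ℝ × ℝ → ℝ) x = 0 := h.2
    have hkmeas : StronglyMeasurable k := (Lp.stronglyMeasurable hLp).indicator hCmeas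
    have hkint : Integrable k := by
      have h2 : MemLp k 2 (volume : Measure (ℝ × ℝ)) := (Lp.memLp hLp).indicator hCmeas
      have h3 := h2.mono_exponent_of_measure_support_ne_top
        (s := C) (fun x hx => Set.indicator_of_notMem hx _) (hCco.measure_lt_top.ne) one_le_two
      exact memLp_one_iff_integrable.mp h3
    have hA : D h = ∫ z : ℝ × ℝ, G z * k z := by
      rw [hD_eq h]
      refine integral_congr_ae ?_
      filter_upwards [hδ] with z h2
      by_cases hz : z ∈ C
      · rw [hk, Set.indicator_of_mem hz]
      · rw [hk, Set.indicator_of_notMem hz, h2 hz, mul_zero]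
    have hmeasF : AEStronglyMeasurable
        (Function.uncurry fun z x : ℝ × ℝ =>
          deriv (swish β) (crossCorr (⇑KL) I x) * I (x + z) * k z)
        ((volume : Measure (ℝ × ℝ)).prod volume) := by
      have hc : Continuous fun p : (ℝ × ℝ) × (ℝ × ℝ) =>
          deriv (swish β) (crossCorr (⇑KL) I p.2) * I (p.2 + p.1) :=
        ((hφ'c.comp ((hu_cont KL).comp continuous_snd))).mul
          (hIc.comp (continuous_snd.add continuous_fst))
      have : (Function.uncurry fun z x : ℝ × ℝ =>
          deriv (swish β) (crossCorr (⇑KL) I x) * I (x + z) * k z)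
          = fun p : (ℝ × ℝ) × (ℝ × ℝ) =>
            (deriv (swish β) (crossCorr (⇑KL) I p.2) * I (p.2 + p.1)) * k p.1 := rfl
      rw [this]
      exact (hc.stronglyMeasurable.mul
        (hkmeas.comp_measurable measurable_fst)).aestronglyMeasurable
    have hintF : Integrable
        (Function.uncurry fun z x : ℝ × ℝ =>
          deriv (swish β) (crossCorr (⇑KL) I x) * I (x + z) * k z)
        ((volume : Measure (ℝ × ℝ)).prod volume) := by
      refine Integrable.mono' (g := fun p : (ℝ × ℝ) × (ℝ × ℝ) =>
        (M * bI * |k p.1|) * S.indicator (fun _ => (1 : ℝ)) p.2) ?_ hmeasF ?_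
      · exact Integrable.mul_prod ((hkint.abs).const_mul _)
          ((integrable_indicator_iff hSmeas).mpr (integrableOn_const hSvol.ne))
      · refine Filter.Eventually.of_forall (fun p => ?_)
        show ‖deriv (swish β) (crossCorr (⇑KL) I p.2) * I (p.2 + p.1) * k p.1‖ ≤
          M * bI * |k p.1| * S.indicator (fun _ => (1 : ℝ)) p.2
        by_cases hx : p.2 ∈ S
        · rw [Set.indicator_of_mem hx, mul_one]
          simp only [Real.norm_eq_abs, abs_mul]
          have h1 : |deriv (swish β) (crossCorr (⇑KL) I p.2)| ≤ M := hM _ (hKbd p.2)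
          have h2 : |I (p.2 + p.1)| ≤ bI := by
            have := hbI (p.2 + p.1); rwa [Real.norm_eq_abs] at this
          have hbI0 : 0 ≤ bI := le_trans (norm_nonneg _) (hbI 0)
          have hM0' : 0 ≤ M := le_max_right _ _
          refine mul_le_mul_of_nonneg_right ?_ (abs_nonneg _)
          exact mul_le_mul h1 h2 (abs_nonneg _) hM0'
        · rw [Set.indicator_of_notMem hx, mul_zero]
          by_cases hk0 : k p.1 = 0
          · simp [hk0]
          · have hzC : p.1 ∈ C := by
              by_contra hc0; exact hk0 (Set.indicator_of_notMem hc0 _)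
            have hI0 : I (p.2 + p.1) = 0 := by
              by_contra hI
              exact hx ⟨(p.2 + p.1, p.1), ⟨subset_tsupport _ hI, hzC⟩, by simp⟩
            simp [hI0]
    have hB : (∫ z : ℝ × ℝ, G z * k z)
        = ∫ x : ℝ × ℝ, deriv (swish β) (crossCorr (⇑KL) I x) * crossCorr (⇑hLp) I x := by
      have hB1 : (∫ z : ℝ × ℝ, G z * k z)
          = ∫ z : ℝ × ℝ, ∫ x : ℝ × ℝ,
              deriv (swish β) (crossCorr (⇑KL) I x) * I (x + z) * k z := by
        refine integral_congr_ae (Filter.Eventually.of_forall fun z => ?_)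
        show G z * k z = ∫ x : ℝ × ℝ,
            deriv (swish β) (crossCorr (⇑KL) I x) * I (x + z) * k z
        have hGz : G z = ∫ x : ℝ × ℝ,
            deriv (swish β) (crossCorr (⇑KL) I x) * I (x + z) := rfl
        rw [hGz, ← integral_mul_const]
      have hB2 := integral_integral_swap
        (f := fun z x : ℝ × ℝ => deriv (swish β) (crossCorr (⇑KL) I x) * I (x + z) * k z) hintF
      rw [hB1, hB2]
      refine integral_congr_ae (Filter.Eventually.of_forall fun x => ?_)
      show (∫ z : ℝ × ℝ, deriv (swish β) (crossCorr (⇑KL) I x) * I (x + z) * k z)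
          = deriv (swish β) (crossCorr (⇑KL) I x) * crossCorr (⇑hLp) I x
      have hB3 : (∫ z : ℝ × ℝ, deriv (swish β) (crossCorr (⇑KL) I x) * I (x + z) * k z)
          = deriv (swish β) (crossCorr (⇑KL) I x) * ∫ z : ℝ × ℝ, I (x + z) * k z := by
        simp_rw [mul_assoc]
        exact integral_const_mul _ _
      rw [hB3]
      congr 1
      have hcc : crossCorr (⇑hLp) I x = ∫ z : ℝ × ℝ, (hLp : ℝ × ℝ → ℝ) z * I (z + x) := rfl
      rw [hcc]
      refine integral_congr_ae ?_
      filter_upwards [hδ] with z h2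
      by_cases hz : z ∈ C
      · rw [hk, Set.indicator_of_mem hz, mul_comm, add_comm]
      · rw [hk, Set.indicator_of_notMem hz, h2 hz, mul_zero, zero_mul]
    rw [hA, hB]
  refine ⟨D, ?_, fun δK => hD_eq δK⟩
  rw [hasFDerivAt_iff_isLittleO_nhds_zero]
  have key : ∀ h : suppSubmodule C, ‖h‖ ≤ 1 →
      ‖g (K + h) - g K - D h‖ ≤ (L * NI ^ 2 * (volume S).toReal) * ‖h‖ ^ 2 := by
    intro h hh1
    set hLp : Lp ℝ 2 (volume : Measure (ℝ × ℝ)) := ↑h with hhLp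
    have hnorm : ‖hLp‖ = ‖h‖ := rfl
    have hcoe : ((↑(K + h) : Lp ℝ 2 (volume : Measure (ℝ × ℝ)))) = KL + hLp := rfl
    set f3 : (ℝ × ℝ) → ℝ := fun x =>
      deriv (swish β) (crossCorr (⇑KL) I x) * crossCorr (⇑hLp) I x with hf3
    have hf3int : Integrable f3 := by
      refine Continuous.integrable_of_hasCompactSupport
        ((hφ'c.comp (hu_cont KL)).mul (hu_cont hLp)) ?_
      refine HasCompactSupport.of_support_subset_isCompact hSco ?_
      intro x hx; by_contra hxS
      rw [Function.mem_support] at hx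
      refine hx ?_
      show deriv (swish β) (crossCorr (⇑KL) I x) * crossCorr (⇑hLp) I x = 0
      rw [hhLp, hu_zero h x hxS, mul_zero]
    have hsum : ∀ x, crossCorr (⇑(KL + hLp)) I x
        = crossCorr (⇑KL) I x + crossCorr (⇑hLp) I x := crossCorr_add hIc hIs KL hLp
    have e1 : Integrable (fun x : ℝ × ℝ => swish β (crossCorr (⇑(KL + hLp)) I x)) :=
      hg_int (K + h)
    have e2 : Integrable (fun x : ℝ × ℝ => swish β (crossCorr (⇑KL) I x)) := hg_int K
    have hgKh : g (K + h) = ∫ x : ℝ × ℝ, swish β (crossCorr (⇑(KL + hLp)) I x) := hg (K + h)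
    have hgK : g K = ∫ x : ℝ × ℝ, swish β (crossCorr (⇑KL) I x) := hg K
    have hFubh : D h = ∫ x : ℝ × ℝ, f3 x := hFub h
    have hsplit : g (K + h) - g K - D h
        = ∫ x : ℝ × ℝ, (swish β (crossCorr (⇑(KL + hLp)) I x)
            - swish β (crossCorr (⇑KL) I x) - f3 x) := by
      have h7 : (∫ x : ℝ × ℝ, (swish β (crossCorr (⇑(KL + hLp)) I x)
            - swish β (crossCorr (⇑KL) I x) - f3 x))
          = (∫ x : ℝ × ℝ, (swish β (crossCorr (⇑(KL + hLp)) I x)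
            - swish β (crossCorr (⇑KL) I x))) - ∫ x : ℝ × ℝ, f3 x :=
        integral_sub (e1.sub e2) hf3int
      have h8 : (∫ x : ℝ × ℝ, (swish β (crossCorr (⇑(KL + hLp)) I x)
            - swish β (crossCorr (⇑KL) I x)))
          = (∫ x : ℝ × ℝ, swish β (crossCorr (⇑(KL + hLp)) I x))
            - ∫ x : ℝ × ℝ, swish β (crossCorr (⇑KL) I x) := integral_sub e1 e2
      rw [hgKh, hgK, hFubh, h7, h8]
    have hzero : ∀ x ∉ S, (swish β (crossCorr (⇑(KL + hLp)) I x)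
        - swish β (crossCorr (⇑KL) I x) - f3 x) = 0 := by
      intro x hx
      have h1 : crossCorr (⇑KL) I x = 0 := hu_zero K x hx
      have h2 : crossCorr (⇑hLp) I x = 0 := hu_zero h x hx
      rw [hsum x, h1, h2, hf3]
      simp [h1, h2, swish_zero]
    have hptwise : ∀ x ∈ S, ‖swish β (crossCorr (⇑(KL + hLp)) I x)
        - swish β (crossCorr (⇑KL) I x) - f3 x‖ ≤ L * (‖h‖ * NI) ^ 2 := by
      intro x _
      have ha : |crossCorr (⇑KL) I x| ≤ R := hKbd x
      have hbsum : |crossCorr (⇑(KL + hLp)) I x| ≤ R := by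
        refine (hu_bd (KL + hLp) x).trans ?_
        have h5 : ‖KL + hLp‖ ≤ ‖KL‖ + 1 := by
          refine (norm_add_le _ _).trans ?_
          rw [hnorm]; linarith
        exact mul_le_mul_of_nonneg_right h5 hNI0
      have hba : crossCorr (⇑(KL + hLp)) I x - crossCorr (⇑KL) I x
          = crossCorr (⇑hLp) I x := by rw [hsum x]; ring
      have h4 := hTay _ _ ha hbsum
      rw [hba] at h4
      have h5 : (crossCorr (⇑hLp) I x) ^ 2 ≤ (‖h‖ * NI) ^ 2 := by
        rw [← sq_abs]
        refine pow_le_pow_left₀ (abs_nonneg _) ?_ 2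
        have h6 := hu_bd hLp x
        rwa [hnorm] at h6
      have h9 : ‖swish β (crossCorr (⇑(KL + hLp)) I x)
          - swish β (crossCorr (⇑KL) I x) - f3 x‖
          = |swish β (crossCorr (⇑(KL + hLp)) I x) - swish β (crossCorr (⇑KL) I x)
            - deriv (swish β) (crossCorr (⇑KL) I x) * crossCorr (⇑hLp) I x| := rfl
      rw [h9]
      exact h4.trans (mul_le_mul_of_nonneg_left h5 hL0)
    rw [hsplit, ← setIntegral_eq_integral_of_forall_compl_eq_zero hzero]
    refine (norm_setIntegral_le_of_norm_le_const hSvol hptwise).trans (le_of_eq (by rw [measureReal_def]; ring))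
  have hev : ∀ᶠ h : suppSubmodule C in nhds 0, ‖h‖ ≤ 1 := by
    filter_upwards [Metric.ball_mem_nhds (0 : suppSubmodule C) one_pos] with h hh
    exact (mem_ball_zero_iff.mp hh).le
  refine IsBigO.trans_isLittleO
    (IsBigO.of_bound (g := fun h : suppSubmodule C => (‖h‖ ^ 2 : ℝ))
      (L * NI ^ 2 * (volume S).toReal) ?_) ?_
  · filter_upwards [hev] with h hh
    refine (key h hh).trans (le_of_eq ?_)
    rw [Real.norm_eq_abs, abs_of_nonneg (by positivity)]
  · rw [isLittleO_iff]
    intro c hc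
    filter_upwards [Metric.ball_mem_nhds (0 : suppSubmodule C) hc] with h hh
    have h1 : ‖h‖ ≤ c := (mem_ball_zero_iff.mp hh).le
    have h2 : ‖(‖h‖ ^ 2 : ℝ)‖ = ‖h‖ * ‖h‖ := by
      rw [Real.norm_eq_abs, abs_of_nonneg (by positivity), sq]
    rw [h2]
    exact mul_le_mul_of_nonneg_right h1 (norm_nonneg _)
end

section
/- Let Δt > 0, β > 0, a < 0, α ∈ ℝ, let Ω be a nonempty finite set, and let g : Ω → ℝ satisfy g(ω) ≥ 0 for all ω. Then the amplifier condition |1 − Δt·(α + (1/2)·a·β·g(ω))| < 1 holds for all ω ∈ Ω if and only if α > −(1/2)·a·β·max_{ω∈Ω} g(ω) and α < 2/Δt − (1/2)·a·β·min_{ω∈Ω} g(ω). -/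
open Finset

/-- Stability criterion for the discretized linearized gradient descent PDE of the
one-layer CNN: the amplifier condition `|1 − Δt·(α + (1/2)·a·β·g(ω))| < 1` holds at all
frequencies iff the weight decay satisfies
`−(1/2)aβ·max g < α < 2/Δt − (1/2)aβ·min g`. -/
theorem cnn_gd_stability_bounds (Δt β a α : ℝ) (hΔt : 0 < Δt) (hβ : 0 < β) (ha : a < 0)
    (Ω : Type*) [Fintype Ω] [Nonempty Ω] (g : Ω → ℝ) (hg : ∀ ω : Ω, 0 ≤ g ω) :
    (∀ ω : Ω, |1 - Δt * (α + 1 / 2 * a * β * g ω)| < 1) ↔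
      (α > -(1 / 2) * a * β * (univ.sup' univ_nonempty g) ∧
        α < 2 / Δt - 1 / 2 * a * β * (univ.inf' univ_nonempty g)) := by
  obtain ⟨ωM, -, hM⟩ := Finset.exists_mem_eq_sup' (univ_nonempty (α := Ω)) g
  obtain ⟨ωm, -, hm⟩ := Finset.exists_mem_eq_inf' (univ_nonempty (α := Ω)) g
  rw [hM, hm]
  have key : 2 / Δt * Δt = 2 := div_mul_cancel₀ 2 hΔt.ne'
  constructor
  · intro h
    have h1 := abs_lt.mp (h ωM)
    have h2 := abs_lt.mp (h ωm)
    constructor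
    · nlinarith [h1.2]
    · nlinarith [h2.1]
  · rintro ⟨h1, h2⟩ ω
    have hgM : g ω ≤ g ωM := hM ▸ le_sup' g (mem_univ ω)
    have hgm : g ωm ≤ g ω := hm ▸ inf'_le g (mem_univ ω)
    rw [abs_lt]
    have hc : 1 / 2 * a * β < 0 := by nlinarith
    have e1 : α + 1 / 2 * a * β * g ω > 0 := by
      nlinarith [mul_le_mul_of_nonpos_left hgM hc.le]
    have e2 : α + 1 / 2 * a * β * g ω < 2 / Δt := by
      nlinarith [mul_le_mul_of_nonpos_left hgm hc.le]
    constructor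
    · nlinarith [mul_lt_mul_of_pos_left e2 hΔt]
    · nlinarith [mul_pos hΔt e1]
end

section
/- Let d > 0 and Δt > 0 with d·Δt < 2, let z > 0, and set μ = (2 − dΔt)/(2 + dΔt) and γ = 2Δt²/(2 + dΔt). If Δt < 2/√(3z), then every complex root λ of the characteristic polynomial λ² − (1 + μ)·(1 − γz)·λ + μ·(1 − γz) satisfies |λ| < 1. Consequently, every complex sequence satisfying the two-step Nesterov recursion x_{n+1} = (1 + μ)·(1 − γz)·x_n − μ·(1 − γz)·x_{n−1} converges to 0. -/
open Filter

/-- Jury criterion for a real quadratic `λ² - bλ + c`. -/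
lemma jury_root_lt_one {b c : ℝ} (hc : |c| < 1) (hb : |b| < 1 + c)
    (lam : ℂ) (hroot : lam ^ 2 - (b : ℂ) * lam + (c : ℂ) = 0) :
    ‖lam‖ < 1 := by
  have hprod : lam * ((b : ℂ) - lam) = (c : ℂ) := by linear_combination -hroot
  have hb1 : 0 < 1 - b + c := by cases abs_lt.mp hb with | intro h1 h2 => linarith
  have hb2 : 0 < 1 + b + c := by cases abs_lt.mp hb with | intro h1 h2 => linarith
  by_cases him : lam.im = 0
  · -- real root
    have hlam : lam = (lam.re : ℂ) := by
      exact Complex.ext rfl (by simp [him])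
    set t : ℝ := lam.re with ht
    have hts : t * (b - t) = c := by
      have := hprod
      rw [hlam] at this
      exact_mod_cast this
    set s : ℝ := b - t with hs
    have habs : ‖lam‖ = |t| := by rw [hlam, Complex.norm_real, Real.norm_eq_abs]
    rw [habs]
    by_contra hcon
    push_neg at hcon
    have hts' : |t| * |s| < 1 := by rw [← abs_mul, hts]; exact hc
    have hslt : |s| < 1 := by
      nlinarith [abs_nonneg s, abs_nonneg t]
    have hs1 : -1 < s := by cases abs_lt.mp hslt with | intro h1 h2 => linarith
    have hs2 : s < 1 := by cases abs_lt.mp hslt with | intro h1 h2 => linarith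
    -- (1-t)(1-s) = 1 - b + c > 0, (1+t)(1+s) = 1 + b + c > 0
    have hp1 : (1 - t) * (1 - s) > 0 := by nlinarith
    have hp2 : (1 + t) * (1 + s) > 0 := by nlinarith
    have h1 : 1 - t > 0 := by nlinarith
    have h2 : 1 + t > 0 := by nlinarith
    have : |t| < 1 := abs_lt.mpr ⟨by linarith, by linarith⟩
    linarith
  · -- complex root: conjugate is the other root
    have hconj : (starRingEnd ℂ) lam ^ 2 - (b : ℂ) * (starRingEnd ℂ) lam + (c : ℂ) = 0 := by
      have := congrArg (starRingEnd ℂ) hroot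
      simpa [map_sub, map_add, map_mul, map_pow, Complex.conj_ofReal] using this
    have hne : lam - (starRingEnd ℂ) lam ≠ 0 := by
      intro h
      apply him
      have : lam = (starRingEnd ℂ) lam := by linear_combination h
      have := Complex.conj_eq_iff_im.mp this.symm
      exact this
    have hsum : lam + (starRingEnd ℂ) lam = (b : ℂ) := by
      have hdiff : (lam - (starRingEnd ℂ) lam) * (lam + (starRingEnd ℂ) lam - (b : ℂ)) = 0 := by
        linear_combination hroot - hconj
      rcases mul_eq_zero.mp hdiff with h | h
      · exact absurd h hne
      · linear_combination h
    have hmul : lam * (starRingEnd ℂ) lam = (c : ℂ) := by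
      have : (starRingEnd ℂ) lam = (b : ℂ) - lam := by linear_combination hsum
      rw [this]; exact hprod
    have hnormSq : (Complex.normSq lam : ℂ) = (c : ℂ) := by
      rw [← Complex.mul_conj]; exact hmul
    have hnsq : Complex.normSq lam = c := by exact_mod_cast hnormSq
    have habs2 : (‖lam‖) ^ 2 = c := by
      rw [← hnsq, Complex.sq_norm]
    nlinarith [norm_nonneg lam, abs_lt.mp hc]

/-- If all roots of `λ² - bλ + c` lie strictly in the unit disk, then any solution of the
two-step recursion tends to zero. -/
lemma recursion_tendsto_zero (b c : ℂ)
    (hroots : ∀ lam : ℂ, lam ^ 2 - b * lam + c = 0 → ‖lam‖ < 1)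
    (x : ℕ → ℂ) (hx : ∀ n : ℕ, x (n + 2) = b * x (n + 1) - c * x n) :
    Tendsto x atTop (nhds 0) := by
  obtain ⟨s, hs⟩ := Complex.isAlgClosed.exists_pow_nat_eq (b ^ 2 - 4 * c) two_pos
  set l1 : ℂ := (b + s) / 2 with hl1
  set l2 : ℂ := (b - s) / 2 with hl2
  have hsum : l1 + l2 = b := by rw [hl1, hl2]; ring
  have hmul : l1 * l2 = c := by rw [hl1, hl2]; linear_combination ((-1 : ℂ)/4) * hs
  have h1 : ‖l1‖ < 1 := hroots l1 (by linear_combination l1 * hsum - hmul)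
  have h2 : ‖l2‖ < 1 := hroots l2 (by linear_combination l2 * hsum - hmul)
  set r : ℝ := max (‖l1‖) (‖l2‖) with hr
  have hr0 : 0 ≤ r := le_max_of_le_left (norm_nonneg _)
  have hr1 : r < 1 := max_lt h1 h2
  have hl1r : ‖l1‖ ≤ r := le_max_left _ _
  have hl2r : ‖l2‖ ≤ r := le_max_right _ _
  set y : ℕ → ℂ := fun n => x (n + 1) - l1 * x n with hy
  have hyrec : ∀ n, y (n + 1) = l2 * y n := by
    intro n
    simp only [hy]
    rw [hx n]
    linear_combination x n * hmul - x (n + 1) * hsum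
  have ypow : ∀ n, y n = l2 ^ n * y 0 := by
    intro n
    induction n with
    | zero => simp
    | succ k ih => rw [hyrec k, ih]; ring
  have hx1 : ∀ n, x (n + 1) = l1 * x n + l2 ^ n * y 0 := by
    intro n
    have h := ypow n
    simp only [hy] at h
    linear_combination h
  have key : ∀ n : ℕ, ‖x (n + 1)‖ ≤
      r ^ (n + 1) * ‖x 0‖ + ((n : ℝ) + 1) * r ^ n * ‖y 0‖ := by
    intro n
    induction n with
    | zero =>
      have e : x 1 = l1 * x 0 + y 0 := by simpa using hx1 0
      have h := norm_add_le (l1 * x 0) (y 0)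
      rw [norm_mul] at h
      rw [e]
      have h0 := norm_nonneg (x 0)
      have hh := mul_le_mul_of_nonneg_right hl1r h0
      calc ‖l1 * x 0 + y 0‖
          ≤ ‖l1‖ * ‖x 0‖ + ‖y 0‖ := h
        _ ≤ r * ‖x 0‖ + ‖y 0‖ := by linarith
        _ = r ^ (0 + 1) * ‖x 0‖ + (((0 : ℕ) : ℝ) + 1) * r ^ 0 * ‖y 0‖ := by
            push_cast; ring
    | succ n ih =>
      have e : x (n + 2) = l1 * x (n + 1) + l2 ^ (n + 1) * y 0 := hx1 (n + 1)
      have h := norm_add_le (l1 * x (n + 1)) (l2 ^ (n + 1) * y 0)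
      rw [norm_mul, norm_mul, norm_pow] at h
      rw [e]
      have h2' : ‖l2‖ ^ (n + 1) ≤ r ^ (n + 1) :=
        pow_le_pow_left₀ (norm_nonneg _) hl2r _
      have hxnn := norm_nonneg (x (n + 1))
      have hynn := norm_nonneg (y 0)
      have hh1 := mul_le_mul_of_nonneg_right hl1r hxnn
      have hh2 := mul_le_mul_of_nonneg_right h2' hynn
      have hh3 := mul_le_mul_of_nonneg_left ih hr0
      calc ‖l1 * x (n + 1) + l2 ^ (n + 1) * y 0‖
          ≤ ‖l1‖ * ‖x (n + 1)‖ +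
              ‖l2‖ ^ (n + 1) * ‖y 0‖ := h
        _ ≤ r * ‖x (n + 1)‖ + r ^ (n + 1) * ‖y 0‖ := by linarith
        _ ≤ r * (r ^ (n + 1) * ‖x 0‖ + ((n : ℝ) + 1) * r ^ n * ‖y 0‖) +
              r ^ (n + 1) * ‖y 0‖ := by linarith
        _ = r ^ (n + 1 + 1) * ‖x 0‖ +
              ((((n + 1 : ℕ)) : ℝ) + 1) * r ^ (n + 1) * ‖y 0‖ := by
            push_cast; ring
  have g1 : Tendsto (fun n : ℕ => r ^ (n + 1) * ‖x 0‖) atTop (nhds 0) := by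
    have h := (tendsto_pow_atTop_nhds_zero_of_lt_one hr0 hr1).mul_const (‖x 0‖)
    rw [zero_mul] at h
    exact (tendsto_add_atTop_iff_nat 1).2 h
  have g2 : Tendsto (fun n : ℕ => ((n : ℝ) + 1) * r ^ n * ‖y 0‖) atTop (nhds 0) := by
    have gA := tendsto_self_mul_const_pow_of_lt_one hr0 hr1
    have gB := tendsto_pow_atTop_nhds_zero_of_lt_one hr0 hr1
    have h := (gA.add gB).mul_const (‖y 0‖)
    rw [add_zero, zero_mul] at h
    exact h.congr (by intro n; ring)
  have hlim : Tendsto (fun n : ℕ => ‖x (n + 1)‖) atTop (nhds 0) := by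
    have hg := g1.add g2
    rw [add_zero] at hg
    exact squeeze_zero (fun n => norm_nonneg _) key hg
  have hlim' : Tendsto (fun n : ℕ => ‖x n‖) atTop (nhds 0) :=
    (tendsto_add_atTop_iff_nat 1).1 hlim
  exact tendsto_zero_iff_norm_tendsto_zero.mpr
    (by simpa using hlim')

/-- CFL condition for the semi-implicit (Nesterov) discretization: if
`Δt < 2/√(3z)` then every root of the characteristic polynomial
`λ² − (1+μ)(1−γz)λ + μ(1−γz)` of the two-step Nesterov recursion lies strictly inside
the unit disk, and consequently every complex sequence satisfying the recursion
`x_{n+1} = (1+μ)(1−γz)x_n − μ(1−γz)x_{n−1}` converges to 0. -/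
theorem nesterov_mode_stability (d Δt z μ γ : ℝ)
    (hd : 0 < d) (hΔt : 0 < Δt) (hdΔt : d * Δt < 2) (hz : 0 < z)
    (hμ : μ = (2 - d * Δt) / (2 + d * Δt)) (hγ : γ = 2 * Δt ^ 2 / (2 + d * Δt))
    (hCFL : Δt < 2 / Real.sqrt (3 * z)) :
    (∀ lam : ℂ, lam ^ 2 - (1 + (μ : ℂ)) * (1 - (γ : ℂ) * (z : ℂ)) * lam +
        (μ : ℂ) * (1 - (γ : ℂ) * (z : ℂ)) = 0 → ‖lam‖ < 1) ∧
    ∀ x : ℕ → ℂ,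
      (∀ n : ℕ, x (n + 2) = (1 + (μ : ℂ)) * (1 - (γ : ℂ) * (z : ℂ)) * x (n + 1) -
        (μ : ℂ) * (1 - (γ : ℂ) * (z : ℂ)) * x n) →
      Tendsto x atTop (nhds 0) := by
  have hden : (2 : ℝ) < 2 + d * Δt := by nlinarith
  have hμ0 : 0 < μ := by rw [hμ]; apply div_pos <;> linarith
  have hμ1 : μ < 1 := by
    rw [hμ, div_lt_one (by linarith)]
    nlinarith
  have hγz0 : 0 < γ * z := by rw [hγ]; positivity
  have h3z : (0 : ℝ) < 3 * z := by linarith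
  have hsqrt : 0 < Real.sqrt (3 * z) := Real.sqrt_pos.mpr h3z
  have h1 : Δt * Real.sqrt (3 * z) < 2 := by
    rw [lt_div_iff₀ hsqrt] at hCFL
    exact hCFL
  have hss : Real.sqrt (3 * z) * Real.sqrt (3 * z) = 3 * z :=
    Real.mul_self_sqrt h3z.le
  have hsq : 3 * z * Δt ^ 2 < 4 := by
    nlinarith [mul_pos hΔt hsqrt]
  have hγz4 : γ * z < 4 / 3 := by
    rw [hγ, div_mul_eq_mul_div, div_lt_iff₀ (by linarith : (0:ℝ) < 2 + d * Δt)]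
    nlinarith
  have hw1 : 1 - γ * z < 1 := by linarith
  have hw3 : -(1 / 3 : ℝ) < 1 - γ * z := by linarith
  have hc : |μ * (1 - γ * z)| < 1 := by
    rw [abs_lt]
    constructor
    · nlinarith [mul_pos hμ0 (show (0:ℝ) < (1 - γ * z) + 1/3 by linarith)]
    · nlinarith [mul_pos (show (0:ℝ) < 1 - μ by linarith)
        (show (0:ℝ) < 1 - (1 - γ * z) by linarith)]
  have hb : |(1 + μ) * (1 - γ * z)| < 1 + μ * (1 - γ * z) := by
    rw [abs_lt]
    constructor
    · nlinarith [mul_pos (show (0:ℝ) < (1 - γ * z) + 1/3 by linarith)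
        (show (0:ℝ) < 1 + 2 * μ by linarith)]
    · nlinarith
  have hroots : ∀ lam : ℂ, lam ^ 2 - (1 + (μ : ℂ)) * (1 - (γ : ℂ) * (z : ℂ)) * lam +
      (μ : ℂ) * (1 - (γ : ℂ) * (z : ℂ)) = 0 → ‖lam‖ < 1 := by
    intro lam hroot
    apply jury_root_lt_one hc hb lam
    push_cast
    linear_combination hroot
  refine ⟨hroots, fun x hx => recursion_tendsto_zero
    ((1 + (μ : ℂ)) * (1 - (γ : ℂ) * (z : ℂ)))
    ((μ : ℂ) * (1 - (γ : ℂ) * (z : ℂ))) hroots x hx⟩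
end

section
/- Let I : ℝ² → ℝ be continuous with compact support, let β > 0, let w > 0, and let V be the closed subspace of L²(ℝ²) consisting of functions supported in C = [−w/2, w/2]². Then the single-layer map Φ : V → L²(ℝ²) defined by Φ(K) = r_β ∘ (K ⋆ I) is Fréchet differentiable at every K ∈ V, with derivative given by δK ↦ r_β'(K ⋆ I) · (δK ⋆ I); i.e., the derivative of the layer output with respect to the kernel at K in direction δK is the pointwise product of r_β'((K ⋆ I)(x)) with (δK ⋆ I)(x). -/
open MeasureTheory

noncomputable def sw1 (β x : ℝ) : ℝ :=
  (1 + Real.exp (-β * x) + β * x * Real.exp (-β * x)) / (1 + Real.exp (-β * x)) ^ 2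

noncomputable def sw2 (β x : ℝ) : ℝ :=
  β * Real.exp (-β * x) * (2 * (1 + Real.exp (-β * x)) + β * x * (Real.exp (-β * x) - 1)) /
    (1 + Real.exp (-β * x)) ^ 3

lemma exp_den_pos (β x : ℝ) : 0 < 1 + Real.exp (-β * x) := by positivity

lemma hasDerivAt_swish (β x : ℝ) : HasDerivAt (swish β) (sw1 β x) x := by
  have hd : HasDerivAt (fun y : ℝ => 1 + Real.exp (-β * y)) (Real.exp (-β * x) * (-β)) x := by
    have : HasDerivAt (fun y : ℝ => -β * y) (-β) x := by
      simpa using (hasDerivAt_id x).const_mul (-β)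
    simpa using (this.exp.const_add 1)
  have h := (hasDerivAt_id x).div hd (ne_of_gt (exp_den_pos β x))
  refine h.congr_deriv ?_
  unfold sw1
  simp only [id]
  field_simp
  ring

lemma hasDerivAt_sw1 (β x : ℝ) : HasDerivAt (sw1 β) (sw2 β x) x := by
  have hd : HasDerivAt (fun y : ℝ => 1 + Real.exp (-β * y)) (Real.exp (-β * x) * (-β)) x := by
    have : HasDerivAt (fun y : ℝ => -β * y) (-β) x := by
      simpa using (hasDerivAt_id x).const_mul (-β)
    simpa using (this.exp.const_add 1)
  have hnum : HasDerivAt (fun y : ℝ => 1 + Real.exp (-β * y) + β * y * Real.exp (-β * y))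
      (Real.exp (-β * x) * (-β) + (β * Real.exp (-β * x) + β * x * (Real.exp (-β * x) * (-β)))) x := by
    have h1 : HasDerivAt (fun y : ℝ => β * y) β x := by simpa using (hasDerivAt_id x).const_mul β
    have h2 : HasDerivAt (fun y : ℝ => Real.exp (-β * y)) (Real.exp (-β * x) * (-β)) x := by
      have : HasDerivAt (fun y : ℝ => -β * y) (-β) x := by
        simpa using (hasDerivAt_id x).const_mul (-β)
      simpa using this.exp
    exact hd.add (h1.mul h2)
  have hden : HasDerivAt (fun y : ℝ => (1 + Real.exp (-β * y)) ^ 2)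
      (2 * (1 + Real.exp (-β * x)) * (Real.exp (-β * x) * (-β))) x := by
    have := hd.fun_pow 2
    simpa [mul_comm, mul_assoc, mul_left_comm] using this
  have h := hnum.div hden (by positivity)
  refine h.congr_deriv ?_
  unfold sw2
  have hne : (1 + Real.exp (-β * x)) ≠ 0 := ne_of_gt (exp_den_pos β x)
  field_simp
  ring

lemma deriv_swish (β : ℝ) : deriv (swish β) = sw1 β :=
  funext fun x => (hasDerivAt_swish β x).deriv

lemma key_ineq_pos {t u : ℝ} (ht : 0 ≤ t) (hu : u = Real.exp (-t)) : t * u ≤ 1 := by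
  have h1 : t + 1 ≤ Real.exp t := Real.add_one_le_exp t
  have h2 : Real.exp t * u = 1 := by rw [hu, ← Real.exp_add]; simp
  have hu0 : 0 < u := hu ▸ Real.exp_pos _
  nlinarith

lemma key_ineq_neg {t u : ℝ} (ht : t ≤ 0) (hu : u = Real.exp (-t)) : -t ≤ u := by
  have h1 : -t + 1 ≤ Real.exp (-t) := Real.add_one_le_exp (-t)
  linarith [hu ▸ h1]

lemma abs_sw1_le (β : ℝ) (hβ : 0 < β) (x : ℝ) : |sw1 β x| ≤ 2 := by
  set u := Real.exp (-β * x) with hu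
  have hu0 : 0 < u := Real.exp_pos _
  rw [sw1, abs_div, abs_of_pos (by positivity : (0:ℝ) < (1 + u) ^ 2),
    div_le_iff₀ (by positivity)]
  rcases le_or_gt 0 (β * x) with ht | ht
  · have h1 : (β * x) * u ≤ 1 := key_ineq_pos ht (by rw [hu]; ring_nf)
    rw [abs_le]; constructor <;> nlinarith
  · have h1 : -(β * x) ≤ u := key_ineq_neg ht.le (by rw [hu]; ring_nf)
    rw [abs_le]; constructor <;> nlinarith

lemma aux2_pos {t u : ℝ} (ht : 0 ≤ t) (hu0 : 0 < u) (hu1 : u ≤ 1) (h1 : t*u ≤ 1) :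
    |u * (2*(1+u) + t*(u-1))| ≤ 3/2 * (1+u)^3 := by
  rw [abs_le]
  constructor <;>
  nlinarith [mul_nonneg (mul_nonneg ht hu0.le) (sub_nonneg.2 hu1), sq_nonneg (1-u),
    sq_nonneg (1+u), mul_pos hu0 hu0]

lemma aux2_neg {t u : ℝ} (ht : t ≤ 0) (h1 : -t ≤ u) (hu1 : 1 ≤ u) :
    |u * (2*(1+u) + t*(u-1))| ≤ 3/2 * (1+u)^3 := by
  have hu0 : (0:ℝ) < u := lt_of_lt_of_le one_pos hu1
  have h2 : -(t*(u-1)) ≤ u*(u-1) := by nlinarith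
  rw [abs_le]
  constructor <;>
  nlinarith [sq_nonneg (1-u), sq_nonneg (1+u), mul_pos hu0 hu0,
    mul_nonneg (neg_nonneg.2 ht) (sub_nonneg.2 hu1)]

lemma abs_sw2_le (β : ℝ) (hβ : 0 < β) (x : ℝ) : |sw2 β x| ≤ 3 * β / 2 := by
  set u := Real.exp (-β * x) with hu
  have hu0 : 0 < u := Real.exp_pos _
  have key : |u * (2*(1+u) + (β*x)*(u-1))| ≤ 3/2 * (1+u)^3 := by
    rcases le_or_gt 0 (β * x) with ht | ht
    · have h1 : (β * x) * u ≤ 1 := key_ineq_pos ht (by rw [hu]; ring_nf)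
      have h2 : u ≤ 1 := by
        rw [hu]
        calc Real.exp (-β * x) ≤ Real.exp 0 := Real.exp_le_exp.2 (by nlinarith)
          _ = 1 := Real.exp_zero
      exact aux2_pos ht hu0 h2 h1
    · have h1 : -(β * x) ≤ u := key_ineq_neg ht.le (by rw [hu]; ring_nf)
      have h2 : 1 ≤ u := by
        rw [hu]
        calc (1:ℝ) = Real.exp 0 := Real.exp_zero.symm
          _ ≤ Real.exp (-β * x) := Real.exp_le_exp.2 (by nlinarith)
      exact aux2_neg ht.le h1 h2
  have hrw : sw2 β x = β * (u * (2*(1+u) + (β*x)*(u-1))) / (1+u)^3 := by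
    rw [sw2]; ring
  rw [hrw, abs_div, abs_mul, abs_of_pos hβ, abs_of_pos (by positivity : (0:ℝ) < (1+u)^3),
    div_le_iff₀ (by positivity)]
  calc β * |u * (2*(1+u) + (β*x)*(u-1))| ≤ β * (3/2 * (1+u)^3) :=
        mul_le_mul_of_nonneg_left key hβ.le
    _ = 3 * β / 2 * (1+u)^3 := by ring

lemma sw1_lipschitz (β : ℝ) (hβ : 0 < β) (a b : ℝ) :
    |sw1 β b - sw1 β a| ≤ 3 * β / 2 * |b - a| := by
  have := Convex.norm_image_sub_le_of_norm_hasDerivWithin_le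
    (f := sw1 β) (f' := sw2 β) (s := Set.univ) (C := 3 * β / 2)
    (fun x _ => (hasDerivAt_sw1 β x).hasDerivWithinAt)
    (fun x _ => by simpa [Real.norm_eq_abs] using abs_sw2_le β hβ x)
    convex_univ (Set.mem_univ a) (Set.mem_univ b)
  simpa [Real.norm_eq_abs] using this

lemma swish_taylor (β : ℝ) (hβ : 0 < β) (a d : ℝ) :
    |swish β (a + d) - swish β a - sw1 β a * d| ≤ 3 * β / 2 * d ^ 2 := by
  set g : ℝ → ℝ := fun x => swish β x - sw1 β a * x with hg
  have hgd : ∀ x, HasDerivAt g (sw1 β x - sw1 β a) x := by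
    intro x
    have hlin : HasDerivAt (fun y : ℝ => sw1 β a * y) (sw1 β a) x := by
      simpa using (hasDerivAt_id x).const_mul (sw1 β a)
    exact (hasDerivAt_swish β x).sub hlin
  have hseg : ∀ x ∈ segment ℝ a (a + d), |x - a| ≤ |d| := by
    intro x hx
    rcases hx with ⟨s, t, hs, ht, hst, rfl⟩
    have hxa : s • a + t • (a + d) - a = t * d := by
      have hs1 : s = 1 - t := by linarith
      simp only [hs1, smul_eq_mul]; ring
    have ht1 : t ≤ 1 := by linarith
    rw [hxa, abs_mul, abs_of_nonneg ht]
    nlinarith [abs_nonneg d]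
  have := Convex.norm_image_sub_le_of_norm_hasDerivWithin_le
    (f := g) (f' := fun x => sw1 β x - sw1 β a) (s := segment ℝ a (a + d))
    (C := 3 * β / 2 * |d|)
    (fun x _ => (hgd x).hasDerivWithinAt)
    (fun x hx => by
      have h1 := sw1_lipschitz β hβ a x
      have h2 := hseg x hx
      rw [Real.norm_eq_abs]
      calc |sw1 β x - sw1 β a| ≤ 3 * β / 2 * |x - a| := h1
        _ ≤ 3 * β / 2 * |d| := by
            apply mul_le_mul_of_nonneg_left h2; positivity)
    (convex_segment _ _) (left_mem_segment ℝ a (a + d)) (right_mem_segment ℝ a (a + d))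
  have heq : g (a + d) - g a = swish β (a + d) - swish β a - sw1 β a * d := by
    simp only [hg]; ring
  rw [Real.norm_eq_abs, heq] at this
  calc |swish β (a + d) - swish β a - sw1 β a * d| ≤ 3 * β / 2 * |d| * ‖a + d - a‖ := this
    _ = 3 * β / 2 * d ^ 2 := by
        rw [show a + d - a = d by ring, Real.norm_eq_abs]
        rw [mul_assoc, ← abs_mul, show d * d = d^2 by ring, abs_of_nonneg (sq_nonneg d)]

lemma continuous_sw1 (β : ℝ) : Continuous (sw1 β) := by
  unfold sw1
  apply Continuous.div
  · fun_prop
  · fun_prop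
  · intro x
    positivity


open MeasureTheory
open scoped ENNReal

lemma integrable_mul_L2 {f g : ℝ × ℝ → ℝ} (hf : MemLp f 2 (volume : Measure (ℝ × ℝ)))
    (hg : MemLp g 2 (volume : Measure (ℝ × ℝ))) :
    Integrable (fun x => f x * g x) (volume : Measure (ℝ × ℝ)) := by
  rw [← memLp_one_iff_integrable]
  have h := hg.smul (φ := f) hf (p := 2) (q := 2) (r := 1)
    (hpqr := ⟨by rw [inv_one]; exact ENNReal.inv_two_add_inv_two⟩)
  exact h

lemma abs_integral_mul_le {f g : ℝ × ℝ → ℝ} (hf : MemLp f 2 (volume : Measure (ℝ × ℝ)))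
    (hg : MemLp g 2 (volume : Measure (ℝ × ℝ))) :
    |∫ x, f x * g x| ≤ (eLpNorm f 2 volume).toReal * (eLpNorm g 2 volume).toReal := by
  set F := hf.toLp f with hF
  set G := hg.toLp g with hG
  have h1 : (∫ x, f x * g x) = ∫ x, F x * G x := by
    refine integral_congr_ae ?_
    filter_upwards [hf.coeFn_toLp, hg.coeFn_toLp] with x h1 h2
    rw [h1, h2]
  have h2 : |inner (𝕜 := ℝ) F G| ≤ ‖F‖ * ‖G‖ := abs_real_inner_le_norm F G
  rw [L2.inner_def] at h2
  simp only [RCLike.inner_apply, conj_trivial] at h2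
  rw [h1]
  calc |∫ x, F x * G x| ≤ ‖F‖ * ‖G‖ := by simpa only [mul_comm] using h2
    _ = (eLpNorm f 2 volume).toReal * (eLpNorm g 2 volume).toReal := by
        rw [hF, hG, Lp.norm_toLp f hf, Lp.norm_toLp g hg]

lemma memL2_translate {I : ℝ × ℝ → ℝ} (hI2 : MemLp I 2 (volume : Measure (ℝ × ℝ))) (z : ℝ × ℝ) :
    MemLp (fun x => I (x + z)) 2 (volume : Measure (ℝ × ℝ)) :=
  hI2.comp_measurePreserving (measurePreserving_add_right volume z)

lemma eLpNorm_translate {I : ℝ × ℝ → ℝ} (hI : AEStronglyMeasurable I (volume : Measure (ℝ × ℝ)))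
    (z : ℝ × ℝ) :
    eLpNorm (fun x => I (x + z)) 2 (volume : Measure (ℝ × ℝ)) = eLpNorm I 2 volume :=
  eLpNorm_comp_measurePreserving hI (measurePreserving_add_right volume z)

lemma crossCorr_congr {f f' I : ℝ × ℝ → ℝ} (h : f =ᵐ[(volume : Measure (ℝ × ℝ))] f') :
    crossCorr f I = crossCorr f' I := by
  funext z
  refine integral_congr_ae ?_
  filter_upwards [h] with x hx
  rw [hx]

lemma crossCorr_bound {I : ℝ × ℝ → ℝ} (hI2 : MemLp I 2 (volume : Measure (ℝ × ℝ)))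
    (K : Lp ℝ 2 (volume : Measure (ℝ × ℝ))) (z : ℝ × ℝ) :
    |crossCorr (K : ℝ × ℝ → ℝ) I z| ≤ ‖K‖ * (eLpNorm I 2 volume).toReal := by
  have h := abs_integral_mul_le (Lp.memLp K) (memL2_translate hI2 z)
  rw [eLpNorm_translate hI2.1 z] at h
  rw [crossCorr]
  calc |∫ x, (K : ℝ × ℝ → ℝ) x * I (x + z)| ≤
      (eLpNorm (K : ℝ × ℝ → ℝ) 2 volume).toReal * (eLpNorm I 2 volume).toReal := h
    _ = ‖K‖ * (eLpNorm I 2 volume).toReal := by rw [← Lp.norm_def]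

lemma crossCorr_eq_zero_s17 {K I : ℝ × ℝ → ℝ} {z : ℝ × ℝ}
    (h : ∀ᵐ x ∂(volume : Measure (ℝ × ℝ)), K x * I (x + z) = 0) : crossCorr K I z = 0 := by
  rw [crossCorr]; exact integral_eq_zero_of_ae h

lemma integrable_of_suppC {C : Set (ℝ × ℝ)} (hCm : MeasurableSet C)
    (hCfin : volume C < ⊤) {K : ℝ × ℝ → ℝ} (hKm : MemLp K 2 (volume : Measure (ℝ × ℝ)))
    (hK : ∀ᵐ x ∂(volume : Measure (ℝ × ℝ)), x ∉ C → K x = 0) :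
    Integrable K (volume : Measure (ℝ × ℝ)) := by
  have h1 : MemLp (C.indicator (fun _ => (1 : ℝ))) 2 (volume : Measure (ℝ × ℝ)) :=
    memLp_indicator_const 2 hCm 1 (Or.inr hCfin.ne)
  have h2 := integrable_mul_L2 hKm h1
  refine h2.congr ?_
  filter_upwards [hK] with x hx
  by_cases hxC : x ∈ C
  · simp [Set.indicator_of_mem hxC]
  · simp [Set.indicator_of_notMem hxC, hx hxC]

lemma crossCorr_continuous {I : ℝ × ℝ → ℝ} (hIc : Continuous I) (hIs : HasCompactSupport I)
    {K : ℝ × ℝ → ℝ} (hKi : Integrable K (volume : Measure (ℝ × ℝ))) :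
    Continuous (crossCorr K I) := by
  obtain ⟨MI, hMI⟩ := hIs.exists_bound_of_continuous hIc
  refine continuous_of_dominated (F := fun z x => K x * I (x + z))
    (bound := fun x => ‖K x‖ * MI) ?_ ?_ ?_ ?_
  · intro z
    exact hKi.aestronglyMeasurable.mul
      ((hIc.comp (continuous_id.add continuous_const)).aestronglyMeasurable)
  · intro z
    filter_upwards with x
    rw [norm_mul]
    exact mul_le_mul_of_nonneg_left (hMI _) (norm_nonneg _)
  · exact hKi.norm.mul_const MI
  · filter_upwards with x
    exact continuous_const.mul (hIc.comp (continuous_const.add continuous_id))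

lemma crossCorr_add_s17 {I : ℝ × ℝ → ℝ} (hI2 : MemLp I 2 (volume : Measure (ℝ × ℝ)))
    (f g : Lp ℝ 2 (volume : Measure (ℝ × ℝ))) (z : ℝ × ℝ) :
    crossCorr ((↑(f + g) : ℝ × ℝ → ℝ)) I z = crossCorr f I z + crossCorr g I z := by
  have h1 : crossCorr ((↑(f + g) : ℝ × ℝ → ℝ)) I
      = crossCorr (fun x => (f : ℝ × ℝ → ℝ) x + (g : ℝ × ℝ → ℝ) x) I :=
    crossCorr_congr (by filter_upwards [Lp.coeFn_add f g] with x hx; exact hx)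
  rw [h1, crossCorr, crossCorr, crossCorr]
  simp_rw [add_mul]
  exact integral_add (integrable_mul_L2 (Lp.memLp f) (memL2_translate hI2 z))
    (integrable_mul_L2 (Lp.memLp g) (memL2_translate hI2 z))

lemma crossCorr_smul {I : ℝ × ℝ → ℝ} (c : ℝ) (f : Lp ℝ 2 (volume : Measure (ℝ × ℝ))) (z : ℝ × ℝ) :
    crossCorr ((↑(c • f) : ℝ × ℝ → ℝ)) I z = c * crossCorr f I z := by
  have h1 : crossCorr ((↑(c • f) : ℝ × ℝ → ℝ)) I
      = crossCorr (fun x => c * (f : ℝ × ℝ → ℝ) x) I :=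
    crossCorr_congr (by filter_upwards [Lp.coeFn_smul c f] with x hx; simpa [smul_eq_mul] using hx)
  rw [h1, crossCorr, crossCorr]
  simp_rw [mul_assoc]
  exact integral_const_mul c _

lemma eLpNorm_le_of_bound_on {S : Set (ℝ × ℝ)} (hSm : MeasurableSet S)
    (hSfin : volume S ≠ ⊤) {g : ℝ × ℝ → ℝ} {c : ℝ}
    (hc : 0 ≤ c) (hg : ∀ z, |g z| ≤ c) (h0 : ∀ z ∉ S, g z = 0) :
    (eLpNorm g 2 (volume : Measure (ℝ × ℝ))).toReal
      ≤ c * ((volume S) ^ (1 / (2:ℝ))).toReal := by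
  have hb : ∀ z, ‖g z‖ ≤ ‖S.indicator (fun _ => c) z‖ := by
    intro z
    by_cases hz : z ∈ S
    · simp only [Set.indicator_of_mem hz, Real.norm_eq_abs]
      rw [abs_of_nonneg hc]; exact hg z
    · simp [Set.indicator_of_notMem hz, h0 z hz]
  have h1 : eLpNorm g 2 volume ≤ eLpNorm (S.indicator fun _ => c) 2 volume := eLpNorm_mono hb
  rw [eLpNorm_indicator_const hSm two_ne_zero ENNReal.ofNat_ne_top] at h1
  have htop : (‖c‖₊ : ℝ≥0∞) * volume S ^ (1 / (2:ℝ≥0∞).toReal) ≠ ⊤ := by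
    exact ENNReal.mul_ne_top ENNReal.coe_ne_top
      (ENNReal.rpow_ne_top_of_nonneg (by norm_num) hSfin)
  have h2 := ENNReal.toReal_mono htop h1
  rw [ENNReal.toReal_mul] at h2
  have h3 : ((‖c‖₊ : ℝ≥0∞)).toReal = c := by
    simp [Real.nnnorm_of_nonneg hc]
  rw [h3] at h2
  have h4 : (1 / (2:ℝ≥0∞).toReal) = 1 / (2:ℝ) := by norm_num
  rwa [h4] at h2

set_option maxHeartbeats 2000000 in
/-- The single convolution-plus-activation layer `Φ(K) = r_β ∘ (K ⋆ I)`, viewed as a map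
from the subspace `V ⊆ L²(ℝ²)` of kernels supported in the square `C = [−w/2, w/2]²`
to `L²(ℝ²)`, is Fréchet differentiable at every `K ∈ V`, with derivative
`δK ↦ r_β'(K ⋆ I)·(δK ⋆ I)` (pointwise product). -/
theorem cnn_layer_kernel_frechet_derivative
    (I : ℝ × ℝ → ℝ) (hIc : Continuous I) (hIs : HasCompactSupport I)
    (β : ℝ) (hβ : 0 < β) (w : ℝ) (hw : 0 < w)
    (C : Set (ℝ × ℝ)) (hC : C = Set.Icc (-(w / 2), -(w / 2)) (w / 2, w / 2))
    (Φ : suppSubmodule C → Lp ℝ 2 (volume : Measure (ℝ × ℝ)))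
    (hΦ : ∀ K : suppSubmodule C,
      (Φ K : ℝ × ℝ → ℝ) =ᵐ[volume] fun x =>
        swish β (crossCorr ((K : Lp ℝ 2 (volume : Measure (ℝ × ℝ))) : ℝ × ℝ → ℝ) I x)) :
    ∀ K : suppSubmodule C,
      ∃ D : suppSubmodule C →L[ℝ] Lp ℝ 2 (volume : Measure (ℝ × ℝ)),
        HasFDerivAt Φ D K ∧
        ∀ δK : suppSubmodule C,
          (D δK : ℝ × ℝ → ℝ) =ᵐ[volume] fun x =>
            deriv (swish β)
                (crossCorr ((K : Lp ℝ 2 (volume : Measure (ℝ × ℝ))) : ℝ × ℝ → ℝ) I x) *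
              crossCorr ((δK : Lp ℝ 2 (volume : Measure (ℝ × ℝ))) : ℝ × ℝ → ℝ) I x := by
  intro K
  have hI2 : MemLp I 2 (volume : Measure (ℝ × ℝ)) := hIc.memLp_of_hasCompactSupport hIs
  set Inr := (eLpNorm I 2 (volume : Measure (ℝ × ℝ))).toReal with hInr
  have hInr0 : 0 ≤ Inr := ENNReal.toReal_nonneg
  have hCcomp : IsCompact C := by rw [hC]; exact isCompact_Icc
  have hCm : MeasurableSet C := hCcomp.isClosed.measurableSet
  have hCfin : volume C < ⊤ := hCcomp.measure_lt_top
  set S : Set (ℝ × ℝ) := (fun p : (ℝ × ℝ) × (ℝ × ℝ) => p.2 - p.1) '' (C ×ˢ tsupport I) with hS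
  have hScomp : IsCompact S := (hCcomp.prod hIs).image (continuous_snd.sub continuous_fst)
  have hSm : MeasurableSet S := hScomp.isClosed.measurableSet
  have hSfin : volume S ≠ ⊤ := hScomp.measure_lt_top.ne
  set volS := ((volume S) ^ (1 / (2:ℝ))).toReal with hvolS
  have hvolS0 : 0 ≤ volS := ENNReal.toReal_nonneg
  have hmem : ∀ L : suppSubmodule C,
      ∀ᵐ x ∂(volume : Measure (ℝ × ℝ)), x ∉ C →
        ((L : Lp ℝ 2 (volume : Measure (ℝ × ℝ))) : ℝ × ℝ → ℝ) x = 0 := fun L => L.2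
  have hTzero : ∀ L : suppSubmodule C, ∀ z ∉ S,
      crossCorr ((L : Lp ℝ 2 (volume : Measure (ℝ × ℝ))) : ℝ × ℝ → ℝ) I z = 0 := by
    intro L z hz
    apply crossCorr_eq_zero_s17
    filter_upwards [hmem L] with x hx
    by_cases hxC : x ∈ C
    · have hIz : I (x + z) = 0 := by
        by_contra hcon
        exact hz ⟨(x, x + z), ⟨hxC, subset_tsupport I (Function.mem_support.2 hcon)⟩, by simp⟩
      simp [hIz]
    · simp [hx hxC]
  have hTbound : ∀ L : suppSubmodule C, ∀ z,
      |crossCorr ((L : Lp ℝ 2 (volume : Measure (ℝ × ℝ))) : ℝ × ℝ → ℝ) I z|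
        ≤ ‖(L : Lp ℝ 2 (volume : Measure (ℝ × ℝ)))‖ * Inr :=
    fun L z => crossCorr_bound hI2 (L : Lp ℝ 2 (volume : Measure (ℝ × ℝ))) z
  have hTcont : ∀ L : suppSubmodule C,
      Continuous (crossCorr ((L : Lp ℝ 2 (volume : Measure (ℝ × ℝ))) : ℝ × ℝ → ℝ) I) :=
    fun L => crossCorr_continuous hIc hIs
      (integrable_of_suppC hCm hCfin (Lp.memLp (L : Lp ℝ 2 (volume : Measure (ℝ × ℝ)))) (hmem L))
  have hTadd : ∀ (L M : suppSubmodule C) (z : ℝ × ℝ),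
      crossCorr (((L + M : suppSubmodule C) : Lp ℝ 2 (volume : Measure (ℝ × ℝ))) : ℝ × ℝ → ℝ) I z
        = crossCorr ((L : Lp ℝ 2 (volume : Measure (ℝ × ℝ))) : ℝ × ℝ → ℝ) I z
          + crossCorr ((M : Lp ℝ 2 (volume : Measure (ℝ × ℝ))) : ℝ × ℝ → ℝ) I z := by
    intro L M z
    have hcoe : ((L + M : suppSubmodule C) : Lp ℝ 2 (volume : Measure (ℝ × ℝ)))
        = (L : Lp ℝ 2 (volume : Measure (ℝ × ℝ))) + (M : Lp ℝ 2 (volume : Measure (ℝ × ℝ))) := rfl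
    rw [hcoe, crossCorr_add_s17 hI2]
  set a : ℝ × ℝ → ℝ :=
    crossCorr ((K : Lp ℝ 2 (volume : Measure (ℝ × ℝ))) : ℝ × ℝ → ℝ) I with ha
  set gfun : suppSubmodule C → ℝ × ℝ → ℝ := fun h z =>
    sw1 β (a z) * crossCorr ((h : Lp ℝ 2 (volume : Measure (ℝ × ℝ))) : ℝ × ℝ → ℝ) I z with hgfun
  have memg : ∀ h : suppSubmodule C, MemLp (gfun h) 2 (volume : Measure (ℝ × ℝ)) := by
    intro h
    apply Continuous.memLp_of_hasCompactSupport
    · exact (((continuous_sw1 β).comp (hTcont K)).mul (hTcont h))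
    · apply HasCompactSupport.intro hScomp
      intro z hz
      simp only [hgfun, hTzero h z hz, mul_zero]
  have gbound : ∀ (h : suppSubmodule C) (z : ℝ × ℝ),
      |gfun h z| ≤ 2 * Inr * ‖(h : Lp ℝ 2 (volume : Measure (ℝ × ℝ)))‖ := by
    intro h z
    have h1 : |gfun h z| ≤ 2 * (‖(h : Lp ℝ 2 (volume : Measure (ℝ × ℝ)))‖ * Inr) := by
      rw [hgfun]
      simp only
      rw [abs_mul]
      exact mul_le_mul (abs_sw1_le β hβ _) (hTbound h z) (abs_nonneg _) (by norm_num)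
    calc |gfun h z| ≤ 2 * (‖(h : Lp ℝ 2 (volume : Measure (ℝ × ℝ)))‖ * Inr) := h1
      _ = 2 * Inr * ‖(h : Lp ℝ 2 (volume : Measure (ℝ × ℝ)))‖ := by ring
  have gzero : ∀ (h : suppSubmodule C), ∀ z ∉ S, gfun h z = 0 := by
    intro h z hz
    simp only [hgfun, hTzero h z hz, mul_zero]
  set Dlin : suppSubmodule C →ₗ[ℝ] Lp ℝ 2 (volume : Measure (ℝ × ℝ)) :=
    { toFun := fun h => (memg h).toLp (gfun h)
      map_add' := by
        intro h1 h2
        rw [← MemLp.toLp_add (memg h1) (memg h2)]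
        apply MemLp.toLp_congr
        apply Filter.EventuallyEq.of_eq
        funext z
        simp only [hgfun, Pi.add_apply]
        rw [hTadd h1 h2 z]
        ring
      map_smul' := by
        intro c h
        simp only [RingHom.id_apply]
        rw [← MemLp.toLp_const_smul c (memg h)]
        apply MemLp.toLp_congr
        apply Filter.EventuallyEq.of_eq
        funext z
        simp only [hgfun, Pi.smul_apply, smul_eq_mul]
        have hcoe : ((c • h : suppSubmodule C) : Lp ℝ 2 (volume : Measure (ℝ × ℝ)))
            = c • (h : Lp ℝ 2 (volume : Measure (ℝ × ℝ))) := rfl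
        rw [hcoe, crossCorr_smul c]
        ring } with hDlin
  have Dbound : ∀ h : suppSubmodule C, ‖Dlin h‖ ≤ (2 * Inr * volS) * ‖h‖ := by
    intro h
    have happ : Dlin h = (memg h).toLp (gfun h) := rfl
    rw [happ, Lp.norm_toLp]
    have hest := eLpNorm_le_of_bound_on hSm hSfin
      (c := 2 * Inr * ‖(h : Lp ℝ 2 (volume : Measure (ℝ × ℝ)))‖)
      (by positivity) (gbound h) (gzero h)
    have hnorm : ‖(h : Lp ℝ 2 (volume : Measure (ℝ × ℝ)))‖ = ‖h‖ := rfl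
    calc (eLpNorm (gfun h) 2 volume).toReal
        ≤ 2 * Inr * ‖(h : Lp ℝ 2 (volume : Measure (ℝ × ℝ)))‖ * volS := hest
      _ = (2 * Inr * volS) * ‖h‖ := by rw [hnorm]; ring
  set D := Dlin.mkContinuous (2 * Inr * volS) Dbound with hD
  have hDcoe : ∀ h : suppSubmodule C, (D h : ℝ × ℝ → ℝ) =ᵐ[volume] gfun h := by
    intro h
    have : D h = (memg h).toLp (gfun h) := rfl
    rw [this]
    exact MemLp.coeFn_toLp _
  have key : ∀ h : suppSubmodule C,
      ‖Φ (K + h) - Φ K - D h‖ ≤ ((3 * β / 2) * Inr ^ 2 * volS) * ‖h‖ ^ 2 := by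
    intro h
    set d : ℝ × ℝ → ℝ :=
      crossCorr ((h : Lp ℝ 2 (volume : Measure (ℝ × ℝ))) : ℝ × ℝ → ℝ) I with hd
    have hFae : ((Φ (K + h) - Φ K - D h : Lp ℝ 2 (volume : Measure (ℝ × ℝ))) : ℝ × ℝ → ℝ)
        =ᵐ[volume] fun z => swish β (a z + d z) - swish β (a z) - sw1 β (a z) * d z := by
      filter_upwards [Lp.coeFn_sub (Φ (K + h) - Φ K) (D h), Lp.coeFn_sub (Φ (K + h)) (Φ K),
        hΦ (K + h), hΦ K, hDcoe h] with z e1 e2 e3 e4 e5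
      rw [e1, Pi.sub_apply, e2, Pi.sub_apply, e3, e4, e5]
      have : crossCorr (((K + h : suppSubmodule C) :
          Lp ℝ 2 (volume : Measure (ℝ × ℝ))) : ℝ × ℝ → ℝ) I z = a z + d z := hTadd K h z
      rw [this]
    rw [Lp.norm_def, eLpNorm_congr_ae hFae]
    have hest := eLpNorm_le_of_bound_on hSm hSfin
      (c := (3 * β / 2) * (‖(h : Lp ℝ 2 (volume : Measure (ℝ × ℝ)))‖ * Inr) ^ 2)
      (by positivity)
      (fun z => by
        have h1 := swish_taylor β hβ (a z) (d z)
        have h2 : |d z| ≤ ‖(h : Lp ℝ 2 (volume : Measure (ℝ × ℝ)))‖ * Inr := hTbound h z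
        have h3 : (d z) ^ 2 ≤ (‖(h : Lp ℝ 2 (volume : Measure (ℝ × ℝ)))‖ * Inr) ^ 2 := by
          rw [← sq_abs]
          exact pow_le_pow_left₀ (abs_nonneg _) h2 2
        calc |swish β (a z + d z) - swish β (a z) - sw1 β (a z) * d z|
            ≤ 3 * β / 2 * (d z) ^ 2 := h1
          _ ≤ (3 * β / 2) * (‖(h : Lp ℝ 2 (volume : Measure (ℝ × ℝ)))‖ * Inr) ^ 2 := by
              apply mul_le_mul_of_nonneg_left h3
              positivity)
      (fun z hz => by
        have : d z = 0 := hTzero h z hz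
        simp [this])
    have hnorm : ‖(h : Lp ℝ 2 (volume : Measure (ℝ × ℝ)))‖ = ‖h‖ := rfl
    calc (eLpNorm (fun z => swish β (a z + d z) - swish β (a z) - sw1 β (a z) * d z)
          2 volume).toReal
        ≤ (3 * β / 2) * (‖(h : Lp ℝ 2 (volume : Measure (ℝ × ℝ)))‖ * Inr) ^ 2 * volS := hest
      _ = ((3 * β / 2) * Inr ^ 2 * volS) * ‖h‖ ^ 2 := by rw [hnorm]; ring
  refine ⟨D, ?_, ?_⟩
  · rw [hasFDerivAt_iff_isLittleO_nhds_zero, Asymptotics.isLittleO_iff]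
    intro ε hε
    set Cq := (3 * β / 2) * Inr ^ 2 * volS with hCq
    have hCq0 : 0 ≤ Cq := by positivity
    have hδ : 0 < ε / (Cq + 1) := by positivity
    filter_upwards [Metric.ball_mem_nhds (0 : suppSubmodule C) hδ] with h hh
    rw [mem_ball_zero_iff] at hh
    have h1 := key h
    have h2 : (Cq + 1) * ‖h‖ ≤ ε := by
      rw [← le_div_iff₀' (by positivity)]
      exact hh.le
    calc ‖Φ (K + h) - Φ K - D h‖ ≤ Cq * ‖h‖ ^ 2 := h1
      _ ≤ ε * ‖h‖ := by nlinarith [norm_nonneg h]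
  · intro δK
    filter_upwards [hDcoe δK] with z hz
    rw [hz, deriv_swish]
end
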